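/- A language L ⊆ Σ* is bideterministic (equivalently, accepted by a dfa whose reverse is again deterministic) if and only if the left derivatives of L are pairwise disjoint: for all u, v ∈ Σ*, either u⁻¹L = v⁻¹L or u⁻¹L ∩ v⁻¹L = ∅. In that case, the set of all finite unions of left derivatives of L, ordered by inclusion, forms a Boolean algebra whose atoms are the nonempty left derivatives. -/
import Mathlib


/-- The left derivative `u⁻¹L = {w : uw ∈ L}`. -/
def leftDeriv {α : Type*} (u : List α) (L : Set (List α)) : Set (List α) :=
  {w | u ++ w ∈ L}

/-- Relational run of an nfa with transition relation `δ`. -/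
def nfaRun {α Q : Type*} (δ : α → Q → Q → Prop) : List α → Q → Q → Prop
  | [], q, q' => q = q'
  | a :: w, q, q' => ∃ p, δ a q p ∧ nfaRun δ w p q'

/-- `L` is bideterministic: it is accepted by a finite automaton which is
deterministic (at most one initial state, deterministic transitions) and whose
reverse is again deterministic (at most one final state, backwards-deterministic
transitions). -/
def Bideterministic {α : Type*} (L : Set (List α)) : Prop :=
  ∃ (Q : Type) (δ : α → Q → Q → Prop) (I F : Set Q),
    Finite Q ∧
    (∀ w : List α, w ∈ L ↔ ∃ q ∈ I, ∃ q' ∈ F, nfaRun δ w q q') ∧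
    I.Subsingleton ∧ (∀ (a : α) (q : Q), {q' | δ a q q'}.Subsingleton) ∧
    F.Subsingleton ∧ (∀ (a : α) (q' : Q), {q | δ a q q'}.Subsingleton)

/-- The join-semilattice of all finite unions of left derivatives of `L`. -/
def Qset {α : Type*} (L : Set (List α)) : Set (Set (List α)) :=
  {M | ∃ s : Finset (List α), M = ⋃ u ∈ s, leftDeriv u L}

section
open Classical
namespace BidetProof

section AuxLemmas
variable {α : Type*}

theorem mem_ld {u w : List α} {L : Set (List α)} : w ∈ leftDeriv u L ↔ u ++ w ∈ L := Iff.rfl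

theorem nfaRun_append {Q : Type*} (δ : α → Q → Q → Prop) :
    ∀ (u v : List α) (q q'' : Q),
      nfaRun δ (u ++ v) q q'' ↔ ∃ q', nfaRun δ u q q' ∧ nfaRun δ v q' q'' := by
  intro u
  induction u with
  | nil => intro v q q''; simp [nfaRun]
  | cons a u ih =>
    intro v q q''
    constructor
    · rintro ⟨p, hp, hr⟩
      obtain ⟨q', h1, h2⟩ := (ih v p q'').mp hr
      exact ⟨q', ⟨p, hp, h1⟩, h2⟩
    · rintro ⟨q', ⟨p, hp, h1⟩, h2⟩
      exact ⟨p, hp, (ih v p q'').mpr ⟨q', h1, h2⟩⟩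

theorem run_fwd {Q : Type*} (δ : α → Q → Q → Prop)
    (hd : ∀ (a : α) (q : Q), {q' | δ a q q'}.Subsingleton) :
    ∀ (w : List α) (q q₁ q₂ : Q), nfaRun δ w q q₁ → nfaRun δ w q q₂ → q₁ = q₂ := by
  intro w
  induction w with
  | nil => intro q q₁ q₂ h1 h2; exact h1.symm.trans h2
  | cons a w ih =>
    rintro q q₁ q₂ ⟨p, hp, hr⟩ ⟨p', hp', hr'⟩
    have : p = p' := hd a q hp hp'
    subst this
    exact ih p q₁ q₂ hr hr'

theorem run_bwd {Q : Type*} (δ : α → Q → Q → Prop)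
    (hd : ∀ (a : α) (q' : Q), {q | δ a q q'}.Subsingleton) :
    ∀ (w : List α) (q₁ q₂ q : Q), nfaRun δ w q₁ q → nfaRun δ w q₂ q → q₁ = q₂ := by
  intro w
  induction w with
  | nil => intro q₁ q₂ q h1 h2; exact h1.trans h2.symm
  | cons a w ih =>
    rintro q₁ q₂ q ⟨p, hp, hr⟩ ⟨p', hp', hr'⟩
    have : p = p' := ih p p' q hr hr'
    subst this
    exact hd a p hp hp'

theorem ld_nonempty_of_append {x y : List α} {L : Set (List α)}
    (h : (leftDeriv (x ++ y) L).Nonempty) : (leftDeriv x L).Nonempty := by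
  obtain ⟨w, hw⟩ := h
  exact ⟨y ++ w, by simpa [mem_ld, List.append_assoc] using hw⟩


theorem disjoint_of_bidet (L : Set (List α)) (h : Bideterministic L) :
    ∀ u v : List α, leftDeriv u L = leftDeriv v L ∨ leftDeriv u L ∩ leftDeriv v L = ∅ := by
  obtain ⟨Q, δ, I, F, _, hacc, hI, hδ, hF, hδ'⟩ := h
  intro u v
  rcases eq_or_ne (leftDeriv u L ∩ leftDeriv v L) ∅ with h | h
  · exact Or.inr h
  left
  obtain ⟨w, hwu, hwv⟩ := Set.nonempty_iff_ne_empty.mpr h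
  obtain ⟨q0, hq0, qf, hqf, hrun⟩ := (hacc (u ++ w)).mp (mem_ld.mp hwu)
  obtain ⟨q0', hq0', qf', hqf', hrun'⟩ := (hacc (v ++ w)).mp (mem_ld.mp hwv)
  obtain ⟨q1, hru, hrw⟩ := (nfaRun_append δ u w _ _).mp hrun
  obtain ⟨q1', hrv, hrw'⟩ := (nfaRun_append δ v w _ _).mp hrun'
  have ef : qf = qf' := hF hqf hqf'
  subst ef
  have e1 : q1 = q1' := run_bwd δ hδ' w q1 q1' qf hrw hrw'
  subst e1
  ext x
  simp only [mem_ld]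
  constructor
  · intro hx
    obtain ⟨p0, hp0, pf, hpf, hr⟩ := (hacc (u ++ x)).mp hx
    obtain ⟨p1, hru2, hrx⟩ := (nfaRun_append δ u x _ _).mp hr
    have e : p0 = q0 := hI hp0 hq0
    rw [e] at hru2
    have e2 : p1 = q1 := run_fwd δ hδ u q0 p1 q1 hru2 hru
    rw [e2] at hrx
    exact (hacc (v ++ x)).mpr ⟨q0', hq0', pf, hpf, (nfaRun_append δ v x _ _).mpr ⟨q1, hrv, hrx⟩⟩
  · intro hx
    obtain ⟨p0, hp0, pf, hpf, hr⟩ := (hacc (v ++ x)).mp hx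
    obtain ⟨p1, hrv2, hrx⟩ := (nfaRun_append δ v x _ _).mp hr
    have e : p0 = q0' := hI hp0 hq0'
    rw [e] at hrv2
    have e2 : p1 = q1 := run_fwd δ hδ v q0' p1 q1 hrv2 hrv
    rw [e2] at hrx
    exact (hacc (u ++ x)).mpr ⟨q0, hq0, pf, hpf, (nfaRun_append δ u x _ _).mpr ⟨q1, hru, hrx⟩⟩

end AuxLemmas

section Construction
variable {α : Type*}

variable (L : Set (List α)) {n : ℕ} (M : DFA α (Fin n))

def st : Setoid (Fin n) :=
  ⟨fun p q => ({w | M.evalFrom p w ∈ M.accept} : Set (List α)) = {w | M.evalFrom q w ∈ M.accept},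
   ⟨fun _ => rfl, Eq.symm, Eq.trans⟩⟩

def mk' (q : Fin n) : Quotient (st M) := Quotient.mk (st M) q

def del (a : α) (s s' : Quotient (st M)) : Prop :=
  ∃ u : List α, s = mk' M (M.eval u) ∧ s' = mk' M (M.eval (u ++ [a])) ∧
    (leftDeriv (u ++ [a]) L).Nonempty

variable (hM : ∀ w : List α, w ∈ M.accepts ↔ w ∈ L)

include hM

theorem geval (u : List α) :
    ({w | M.evalFrom (M.eval u) w ∈ M.accept} : Set (List α)) = leftDeriv u L := by
  ext w
  simp only [Set.mem_setOf_eq, mem_ld]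
  rw [← hM, DFA.mem_accepts, DFA.eval, DFA.evalFrom_of_append]

theorem cls_eq {u v : List α} :
    mk' M (M.eval u) = mk' M (M.eval v) ↔ leftDeriv u L = leftDeriv v L := by
  rw [mk', mk', Quotient.eq]
  show (_ : Set (List α)) = _ ↔ _
  rw [geval L M hM, geval L M hM]

omit hM in
theorem ld_snoc_congr {u v : List α} (a : α) (huv : leftDeriv u L = leftDeriv v L) :
    leftDeriv (u ++ [a]) L = leftDeriv (v ++ [a]) L := by
  ext x
  constructor
  · intro h
    have : a :: x ∈ leftDeriv v L := huv ▸ (by simpa [mem_ld, List.append_assoc] using h)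
    simpa [mem_ld, List.append_assoc] using this
  · intro h
    have : a :: x ∈ leftDeriv u L := huv.symm ▸ (by simpa [mem_ld, List.append_assoc] using h)
    simpa [mem_ld, List.append_assoc] using this

variable (hne : ∀ u v : List α,
  (leftDeriv u L ∩ leftDeriv v L).Nonempty → leftDeriv u L = leftDeriv v L)

include hne

omit hM in theorem cancel {u v : List α} {a : α} (h : leftDeriv (u ++ [a]) L = leftDeriv (v ++ [a]) L)
    (h2 : (leftDeriv (u ++ [a]) L).Nonempty) : leftDeriv u L = leftDeriv v L := by
  obtain ⟨w, hw⟩ := h2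
  have hw' : w ∈ leftDeriv (v ++ [a]) L := h ▸ hw
  refine hne u v ⟨a :: w, ?_, ?_⟩
  · exact mem_ld.mpr (by simpa [mem_ld, List.append_assoc] using hw)
  · exact mem_ld.mpr (by simpa [mem_ld, List.append_assoc] using hw')

omit hne in theorem runA : ∀ (w u : List α) (s' : Quotient (st M)),
    nfaRun (del L M) w (mk' M (M.eval u)) s' → s' = mk' M (M.eval (u ++ w)) := by
  intro w
  induction w with
  | nil => intro u s' h; simpa using h.symm
  | cons a w ih =>
    rintro u s' ⟨p, ⟨v, hv1, hv2, hv3⟩, hr⟩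
    have huv : leftDeriv v L = leftDeriv u L := (cls_eq L M hM).mp hv1.symm
    have : leftDeriv (v ++ [a]) L = leftDeriv (u ++ [a]) L := ld_snoc_congr L a huv
    have hp : p = mk' M (M.eval (u ++ [a])) := by
      rw [hv2]; exact (cls_eq L M hM).mpr this
    subst hp
    have := ih (u ++ [a]) s' hr
    simpa [List.append_assoc] using this

omit hM hne in theorem runB : ∀ (w u : List α), (leftDeriv (u ++ w) L).Nonempty →
    nfaRun (del L M) w (mk' M (M.eval u)) (mk' M (M.eval (u ++ w))) := by
  intro w
  induction w with
  | nil => intro u _; simp [nfaRun]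
  | cons a w ih =>
    intro u h
    have h' : (leftDeriv ((u ++ [a]) ++ w) L).Nonempty := by
      simpa [List.append_assoc] using h
    refine ⟨mk' M (M.eval (u ++ [a])), ⟨u, rfl, rfl, ld_nonempty_of_append h'⟩, ?_⟩
    have := ih (u ++ [a]) h'
    simpa [List.append_assoc] using this

theorem bidet_of_disjoint : Bideterministic L := by
  refine ⟨Quotient (st M), del L M, {mk' M M.start},
    {s | ∃ u : List α, s = mk' M (M.eval u) ∧ u ∈ L}, ?_, ?_, ?_, ?_, ?_, ?_⟩
  · exact Quotient.finite _
  · intro w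
    constructor
    · intro hw
      have h1 : (leftDeriv ([] ++ w) L).Nonempty := ⟨[], by simpa [mem_ld] using hw⟩
      have hr := runB L M w [] h1
      refine ⟨mk' M M.start, rfl, mk' M (M.eval w), ⟨w, rfl, hw⟩, ?_⟩
      simpa [DFA.eval_nil] using hr
    · rintro ⟨q, hq, q', ⟨v, hv, hvL⟩, hrun⟩
      rw [Set.mem_singleton_iff] at hq
      subst hq
      have hq0 : mk' M M.start = mk' M (M.eval []) := by simp [DFA.eval_nil]
      rw [hq0] at hrun
      have := runA L M hM w [] q' hrun
      rw [this] at hv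
      have hwv : leftDeriv w L = leftDeriv v L := by
        have := (cls_eq L M hM).mp (by simpa using hv)
        exact this
      have : [] ∈ leftDeriv v L := by simpa [mem_ld] using hvL
      rw [← hwv] at this
      simpa [mem_ld] using this
  · exact Set.subsingleton_singleton
  · rintro a s p₁ ⟨u, hu1, hu2, _⟩ p₂ ⟨v, hv1, hv2, _⟩
    have huv : leftDeriv u L = leftDeriv v L := (cls_eq L M hM).mp (hu1.symm.trans hv1)
    rw [hu2, hv2]
    exact (cls_eq L M hM).mpr (ld_snoc_congr L a huv)
  · rintro s₁ ⟨u, hu1, huL⟩ s₂ ⟨v, hv1, hvL⟩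
    have : leftDeriv u L = leftDeriv v L :=
      hne u v ⟨[], by simpa [mem_ld] using huL, by simpa [mem_ld] using hvL⟩
    rw [hu1, hv1]
    exact (cls_eq L M hM).mpr this
  · rintro a p s₁ ⟨u, hu1, hu2, hu3⟩ s₂ ⟨v, hv1, hv2, hv3⟩
    have heq : leftDeriv (u ++ [a]) L = leftDeriv (v ++ [a]) L :=
      (cls_eq L M hM).mp (hu2.symm.trans hv2)
    have : leftDeriv u L = leftDeriv v L := cancel L hne heq hu3
    rw [hu1, hv1]
    exact (cls_eq L M hM).mpr this


noncomputable def repf (q : Fin n) : List α :=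
  if h : ∃ u : List α, M.eval u = q then h.choose else []

noncomputable def repS : Finset (List α) := Finset.univ.image (repf M)

omit hne in
theorem rep_spec (u : List α) :
    ∃ r ∈ repS M, leftDeriv r L = leftDeriv u L := by
  refine ⟨repf M (M.eval u), Finset.mem_image_of_mem _ (Finset.mem_univ _), ?_⟩
  have hex : ∃ x : List α, M.eval x = M.eval u := ⟨u, rfl⟩
  rw [repf, dif_pos hex]
  have h1 : M.eval hex.choose = M.eval u := hex.choose_spec
  rw [← geval L M hM, ← geval L M hM, h1]

omit hM hne in
theorem qset_union : ∀ M₁ ∈ Qset L, ∀ M₂ ∈ Qset L, M₁ ∪ M₂ ∈ Qset L := by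
  rintro M₁ ⟨s, rfl⟩ M₂ ⟨t, rfl⟩
  refine ⟨s ∪ t, ?_⟩
  ext w
  simp only [Set.mem_union, Set.mem_iUnion, Finset.mem_union, exists_prop]
  constructor
  · rintro (⟨u, hu, h⟩ | ⟨u, hu, h⟩)
    · exact ⟨u, Or.inl hu, h⟩
    · exact ⟨u, Or.inr hu, h⟩
  · rintro ⟨u, hu | hu, h⟩
    · exact Or.inl ⟨u, hu, h⟩
    · exact Or.inr ⟨u, hu, h⟩

omit hM in
theorem qset_inter : ∀ M₁ ∈ Qset L, ∀ M₂ ∈ Qset L, M₁ ∩ M₂ ∈ Qset L := by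
  rintro M₁ ⟨s, rfl⟩ M₂ ⟨t, rfl⟩
  classical
  refine ⟨s.filter (fun u => leftDeriv u L ⊆ ⋃ v ∈ t, leftDeriv v L), ?_⟩
  ext w
  simp only [Set.mem_inter_iff, Set.mem_iUnion, Finset.mem_filter, exists_prop]
  constructor
  · rintro ⟨⟨u, hu, hwu⟩, ⟨v, hv, hwv⟩⟩
    have heq : leftDeriv u L = leftDeriv v L := hne u v ⟨w, hwu, hwv⟩
    refine ⟨u, ⟨hu, ?_⟩, hwu⟩
    intro x hx
    exact Set.mem_iUnion₂.mpr ⟨v, hv, heq ▸ hx⟩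
  · rintro ⟨u, ⟨hu, hsub⟩, hwu⟩
    refine ⟨⟨u, hu, hwu⟩, ?_⟩
    have := hsub hwu
    simpa using this

theorem qset_diff :
    ∀ K ∈ Qset L, (⋃ u : List α, leftDeriv u L) \ K ∈ Qset L := by
  rintro K ⟨t, rfl⟩
  classical
  refine ⟨(repS M).filter (fun u => ¬ leftDeriv u L ⊆ ⋃ v ∈ t, leftDeriv v L), ?_⟩
  ext w
  simp only [Set.mem_diff, Set.mem_iUnion, Finset.mem_filter, exists_prop]
  constructor
  · rintro ⟨⟨u, hwu⟩, hw2⟩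
    obtain ⟨r, hr, hrEq⟩ := rep_spec L M hM u
    have hwr : w ∈ leftDeriv r L := hrEq ▸ hwu
    refine ⟨r, ⟨hr, fun hsub => hw2 ?_⟩, hwr⟩
    simpa using hsub hwr
  · rintro ⟨u, ⟨hu, hnsub⟩, hwu⟩
    refine ⟨⟨u, hwu⟩, fun ⟨v, hv, hwv⟩ => ?_⟩
    have heq : leftDeriv u L = leftDeriv v L := hne u v ⟨w, hwu, hwv⟩
    exact hnsub (fun x hx => Set.mem_iUnion₂.mpr ⟨v, hv, heq ▸ hx⟩)

omit hM in
theorem qset_atoms : ∀ M₀ : Set (List α),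
    (M₀ ∈ Qset L ∧ M₀ ≠ ∅ ∧ ∀ M' ∈ Qset L, M' ⊆ M₀ → M' = ∅ ∨ M' = M₀) ↔
    (∃ u : List α, M₀ = leftDeriv u L ∧ M₀ ≠ ∅) := by
  intro M₀
  constructor
  · rintro ⟨⟨s, rfl⟩, hne0, hmin⟩
    obtain ⟨w, hw⟩ := Set.nonempty_iff_ne_empty.mpr hne0
    obtain ⟨u, hu, hwu⟩ := Set.mem_iUnion₂.mp hw
    have hsub : leftDeriv u L ⊆ ⋃ v ∈ s, leftDeriv v L :=
      fun y hy => Set.mem_iUnion₂.mpr ⟨u, hu, hy⟩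
    have hsingle : leftDeriv u L ∈ Qset L := ⟨{u}, by simp⟩
    rcases hmin (leftDeriv u L) hsingle hsub with h | h
    · exact absurd h (Set.nonempty_iff_ne_empty.mp ⟨w, hwu⟩)
    · exact ⟨u, h.symm, hne0⟩
  · rintro ⟨u, rfl, hne0⟩
    refine ⟨⟨{u}, by simp⟩, hne0, ?_⟩
    rintro M' ⟨t, rfl⟩ hsub
    by_cases hex : ∃ v ∈ t, (leftDeriv v L).Nonempty
    · right
      obtain ⟨v, hv, x, hx⟩ := hex
      have h1 : leftDeriv v L ⊆ leftDeriv u L :=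
        fun y hy => hsub (Set.mem_iUnion₂.mpr ⟨v, hv, hy⟩)
      have h2 : leftDeriv v L = leftDeriv u L := hne v u ⟨x, hx, h1 hx⟩
      exact Set.Subset.antisymm hsub (h2 ▸ (fun y hy => Set.mem_iUnion₂.mpr ⟨v, hv, hy⟩ : leftDeriv v L ⊆ ⋃ x ∈ t, leftDeriv x L))
    · left
      apply Set.eq_empty_iff_forall_notMem.mpr
      intro w hw
      obtain ⟨v, hv, hwv⟩ := Set.mem_iUnion₂.mp hw
      exact hex ⟨v, hv, ⟨w, hwv⟩⟩


end Construction

end BidetProof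
end

/-- A regular language `L` is bideterministic iff its left derivatives are pairwise
disjoint; in that case the finite unions of left derivatives form a Boolean algebra
(closed under binary unions, intersections and relative complements with respect to
the top element `⋃_u u⁻¹L`) whose atoms are exactly the nonempty left derivatives. -/
theorem bideterministic_iff_derivatives_disjoint {α : Type*} (L : Set (List α))
    (hreg : ∃ (n : ℕ) (M : DFA α (Fin n)), ∀ w : List α, w ∈ M.accepts ↔ w ∈ L) :
    (Bideterministic L ↔
      ∀ u v : List α, leftDeriv u L = leftDeriv v L ∨ leftDeriv u L ∩ leftDeriv v L = ∅) ∧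
    ((∀ u v : List α,
        leftDeriv u L = leftDeriv v L ∨ leftDeriv u L ∩ leftDeriv v L = ∅) →
      ((∀ M₁ ∈ Qset L, ∀ M₂ ∈ Qset L, M₁ ∪ M₂ ∈ Qset L) ∧
       (∀ M₁ ∈ Qset L, ∀ M₂ ∈ Qset L, M₁ ∩ M₂ ∈ Qset L) ∧
       (∀ M ∈ Qset L, (⋃ u : List α, leftDeriv u L) \ M ∈ Qset L) ∧
       (∀ M : Set (List α),
         (M ∈ Qset L ∧ M ≠ ∅ ∧ ∀ M' ∈ Qset L, M' ⊆ M → M' = ∅ ∨ M' = M) ↔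
         (∃ u : List α, M = leftDeriv u L ∧ M ≠ ∅)))) := by
  obtain ⟨n, M, hM⟩ := hreg
  have hres : (∀ u v : List α,
      leftDeriv u L = leftDeriv v L ∨ leftDeriv u L ∩ leftDeriv v L = ∅) →
      ∀ u v : List α, (leftDeriv u L ∩ leftDeriv v L).Nonempty →
        leftDeriv u L = leftDeriv v L := by
    intro hdisj u v h
    refine (hdisj u v).resolve_right (fun he => ?_)
    rw [he] at h
    exact Set.not_nonempty_empty h
  constructor
  · constructor
    · exact BidetProof.disjoint_of_bidet L
    · intro hdisj
      exact BidetProof.bidet_of_disjoint L M hM (hres hdisj)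
  · intro hdisj
    have hne := hres hdisj
    exact ⟨BidetProof.qset_union L, BidetProof.qset_inter L hne,
      BidetProof.qset_diff L M hM hne, BidetProof.qset_atoms L hne⟩
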